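/- Let ε: K_par G → B be the K-linear map given by ε(z) = 1 ◁ z, where B is the subalgebra generated by the idempotents e_g and u ◁ [g] = [g^{-1}] u [g]. Then for all h ∈ G and z ∈ K_par G, [h^{-1}] ε(z) = ε(z[h]) [h^{-1}]. -/

import Mathlib

/-- The defining relations of Exel's semigroup `S(G)` of a group `G`:
`[1] = 1`, `[s⁻¹][s][t] = [s⁻¹][st]`, `[s][t][t⁻¹] = [st][t⁻¹]`. -/
inductive ExelRel (G : Type*) [Group G] : FreeMonoid G → FreeMonoid G → Prop
  | one : ExelRel G (FreeMonoid.of 1) 1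
  | left (s t : G) : ExelRel G
      (FreeMonoid.of s⁻¹ * FreeMonoid.of s * FreeMonoid.of t)
      (FreeMonoid.of s⁻¹ * FreeMonoid.of (s * t))
  | right (s t : G) : ExelRel G
      (FreeMonoid.of s * FreeMonoid.of t * FreeMonoid.of t⁻¹)
      (FreeMonoid.of (s * t) * FreeMonoid.of t⁻¹)

/-- The congruence on the free monoid on `G` generated by the Exel relations. -/
def ExelCon (G : Type*) [Group G] : Con (FreeMonoid G) := conGen (ExelRel G)

/-- Exel's semigroup (an inverse monoid) `S(G)` of the group `G`. -/
abbrev ExelMonoid (G : Type*) [Group G] := (ExelCon G).Quotient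

/-- The canonical generator `[g]` of `S(G)`. -/
def ExelMonoid.of {G : Type*} [Group G] (g : G) : ExelMonoid G :=
  (ExelCon G).mk' (FreeMonoid.of g)

/-- The idempotent `e_g := [g][g⁻¹]` in `S(G)`. -/
def ExelMonoid.e {G : Type*} [Group G] (g : G) : ExelMonoid G :=
  ExelMonoid.of g * ExelMonoid.of g⁻¹

/-- The partial group algebra `K_par G`: the semigroup `K`-algebra of Exel's semigroup. -/
abbrev KparG (K G : Type*) [CommRing K] [Group G] := MonoidAlgebra K (ExelMonoid G)

/-- The canonical generator `[g]` of `K_par G`. -/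
noncomputable def pr (K : Type*) {G : Type*} [CommRing K] [Group G] (g : G) : KparG K G :=
  MonoidAlgebra.of K (ExelMonoid G) (ExelMonoid.of g)

/-- The idempotent `e_g := [g][g⁻¹]` in `K_par G`. -/
noncomputable def eK (K : Type*) {G : Type*} [CommRing K] [Group G] (g : G) : KparG K G :=
  pr K g * pr K g⁻¹

theorem exelRel_mk {G : Type*} [Group G] {x y : FreeMonoid G} (h : ExelRel G x y) :
    (x : ExelMonoid G) = (y : ExelMonoid G) :=
  (Con.eq _).mpr (ConGen.Rel.of _ _ h)

/-- The inverse-semigroup involution `w ↦ w*` of `S(G)`, as a monoid hom to the opposite. -/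
noncomputable def exelStarHom (G : Type*) [Group G] :
    ExelMonoid G →* (ExelMonoid G)ᵐᵒᵖ :=
  Con.lift _ (FreeMonoid.lift fun g => MulOpposite.op (ExelMonoid.of g⁻¹)) (by
    refine Con.conGen_le.mpr ?_
    intro x y hxy
    rw [Con.ker_rel]
    cases hxy with
    | one =>
        simp only [map_one, FreeMonoid.lift_eval_of, inv_one, MulOpposite.op_eq_one_iff]
        simpa [ExelMonoid.of] using exelRel_mk (ExelRel.one (G := G))
    | left s t =>
        simp only [map_mul, FreeMonoid.lift_eval_of, ← MulOpposite.op_mul]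
        congr 1
        rw [mul_inv_rev, ← mul_assoc]
        simpa [ExelMonoid.of, mul_assoc] using exelRel_mk (ExelRel.right (G := G) t⁻¹ s⁻¹)
    | right s t =>
        simp only [map_mul, FreeMonoid.lift_eval_of, ← MulOpposite.op_mul]
        congr 1
        rw [mul_inv_rev]
        simpa [ExelMonoid.of, mul_assoc] using exelRel_mk (ExelRel.left (G := G) t⁻¹ s⁻¹))

/-- The involution `w ↦ w*` on `S(G)`. -/
noncomputable def exelStar {G : Type*} [Group G] (w : ExelMonoid G) : ExelMonoid G :=
  (exelStarHom G w).unop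

/-- The map `ε : K_par G → K_par G`, `ε(z) = 1 ◁ z`: the `K`-linear extension of
`w ↦ w* w` on basis elements `w ∈ S(G)`; on generators `u ◁ [g] = [g⁻¹] u [g]`,
so that `ε(z) = 1 ◁ z`. -/
noncomputable def epsKpar (K G : Type*) [CommRing K] [Group G] :
    KparG K G →ₗ[K] KparG K G :=
  MonoidAlgebra.mapDomainLinearMap K K (fun w : ExelMonoid G => exelStar w * w)

/-- `B`, the subalgebra of `K_par G` generated by the idempotents `e_g`. -/
noncomputable def Bsub (K G : Type*) [CommRing K] [Group G] : Subalgebra K (KparG K G) :=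
  Algebra.adjoin K (Set.range fun g : G => eK K g)


section AuxLemmas

variable {G : Type*} [Group G]

lemma exel_coe_mul (x y : FreeMonoid G) :
    ((x * y : FreeMonoid G) : ExelMonoid G) = (x : ExelMonoid G) * y := rfl

lemma exel_of_eq (g : G) :
    ExelMonoid.of g = ((FreeMonoid.of g : FreeMonoid G) : ExelMonoid G) := rfl

lemma exel_of_one : ExelMonoid.of (1 : G) = 1 := by
  have := exelRel_mk (ExelRel.one (G := G))
  simpa [exel_of_eq] using this

lemma exel_left (s t : G) :
    ExelMonoid.of s⁻¹ * ExelMonoid.of s * ExelMonoid.of t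
      = ExelMonoid.of s⁻¹ * ExelMonoid.of (s * t) := by
  have := exelRel_mk (ExelRel.left (G := G) s t)
  simpa [exel_of_eq, exel_coe_mul] using this

lemma exel_right (s t : G) :
    ExelMonoid.of s * ExelMonoid.of t * ExelMonoid.of t⁻¹
      = ExelMonoid.of (s * t) * ExelMonoid.of t⁻¹ := by
  have := exelRel_mk (ExelRel.right (G := G) s t)
  simpa [exel_of_eq, exel_coe_mul] using this

lemma of_mul_e (g h : G) :
    ExelMonoid.of g * ExelMonoid.e h = ExelMonoid.e (g * h) * ExelMonoid.of g := by
  unfold ExelMonoid.e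
  rw [← mul_assoc, exel_right g h]
  have h2 := exel_left (G := G) (g * h)⁻¹ g
  rw [inv_inv] at h2
  have h3 : (g * h)⁻¹ * g = h⁻¹ := by group
  rw [h3] at h2
  rw [mul_assoc, ← h2, mul_assoc]

lemma e_comm (g h : G) :
    ExelMonoid.e g * ExelMonoid.e h = ExelMonoid.e h * ExelMonoid.e g := by
  have h1 := of_mul_e g⁻¹ h
  have h2 := of_mul_e g (g⁻¹ * h)
  have h3 : g * (g⁻¹ * h) = h := by group
  rw [h3] at h2
  have expand : ExelMonoid.e g * ExelMonoid.e h
      = ExelMonoid.of g * (ExelMonoid.of g⁻¹ * ExelMonoid.e h) := by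
    show (ExelMonoid.of g * ExelMonoid.of g⁻¹) * ExelMonoid.e h = _
    rw [mul_assoc]
  rw [expand, h1, ← mul_assoc, h2, mul_assoc]
  rfl

/-- The submonoid of `S(G)` generated by the idempotents `e_g`. -/
def Esub (G : Type*) [Group G] : Submonoid (ExelMonoid G) :=
  Submonoid.closure (Set.range (ExelMonoid.e (G := G)))

lemma e_mem_E (g : G) : ExelMonoid.e g ∈ Esub G :=
  Submonoid.subset_closure ⟨g, rfl⟩

lemma conj_exists {u : ExelMonoid G} (hu : u ∈ Esub G) (g : G) :
    ∃ u' ∈ Esub G, ExelMonoid.of g * u = u' * ExelMonoid.of g := by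
  induction hu using Submonoid.closure_induction with
  | mem x hx =>
      obtain ⟨k, rfl⟩ := hx
      exact ⟨ExelMonoid.e (g * k), e_mem_E _, of_mul_e g k⟩
  | one => exact ⟨1, one_mem _, by simp⟩
  | mul x y hx hy ihx ihy =>
      obtain ⟨x', hx', hex⟩ := ihx
      obtain ⟨y', hy', hey⟩ := ihy
      exact ⟨x' * y', mul_mem hx' hy', by
        rw [← mul_assoc, hex, mul_assoc, hey, ← mul_assoc]⟩

lemma e_commutes_E {u : ExelMonoid G} (hu : u ∈ Esub G) (h : G) :
    u * ExelMonoid.e h = ExelMonoid.e h * u := by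
  induction hu using Submonoid.closure_induction with
  | mem x hx => obtain ⟨k, rfl⟩ := hx; exact e_comm k h
  | one => simp
  | mul x y _ _ ihx ihy => rw [mul_assoc, ihy, ← mul_assoc, ihx, mul_assoc]

lemma exelStar_of (g : G) : exelStar (ExelMonoid.of g) = ExelMonoid.of g⁻¹ := by
  unfold exelStar exelStarHom
  show MulOpposite.unop ((FreeMonoid.lift fun g => MulOpposite.op (ExelMonoid.of g⁻¹))
    (FreeMonoid.of g)) = _
  rw [FreeMonoid.lift_eval_of, MulOpposite.unop_op]

lemma exelStar_mul (x y : ExelMonoid G) :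
    exelStar (x * y) = exelStar y * exelStar x := by
  unfold exelStar
  rw [map_mul, MulOpposite.unop_mul]

lemma exelStar_one : exelStar (1 : ExelMonoid G) = 1 := by
  unfold exelStar; rw [map_one, MulOpposite.unop_one]

lemma star_sandwich (w : FreeMonoid G) :
    ∀ u ∈ Esub G, exelStar (w : ExelMonoid G) * u * (w : ExelMonoid G) ∈ Esub G := by
  induction w using FreeMonoid.recOn with
  | one =>
      intro u hu
      have : ((1 : FreeMonoid G) : ExelMonoid G) = 1 := rfl
      simpa [this, exelStar_one] using hu
  | of_mul g v ih =>
      intro u hu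
      have hco : ((FreeMonoid.of g * v : FreeMonoid G) : ExelMonoid G)
          = ExelMonoid.of g * (v : ExelMonoid G) := rfl
      rw [hco, exelStar_mul, exelStar_of]
      obtain ⟨u', hu', heq⟩ := conj_exists hu g⁻¹
      have key : ExelMonoid.of g⁻¹ * u * ExelMonoid.of g ∈ Esub G := by
        rw [heq, mul_assoc]
        have hge : ExelMonoid.of g⁻¹ * ExelMonoid.of g = ExelMonoid.e g⁻¹ := by
          show _ = ExelMonoid.of g⁻¹ * ExelMonoid.of g⁻¹⁻¹
          rw [inv_inv]
        rw [hge]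
        exact mul_mem hu' (e_mem_E _)
      have h2 := ih _ key
      have reassoc : exelStar (v : ExelMonoid G) * ExelMonoid.of g⁻¹ * u *
            (ExelMonoid.of g * (v : ExelMonoid G))
          = exelStar (v : ExelMonoid G) * (ExelMonoid.of g⁻¹ * u * ExelMonoid.of g) *
            (v : ExelMonoid G) := by
        simp only [mul_assoc]
      rw [reassoc]
      exact h2

lemma star_self_mem (w : ExelMonoid G) : exelStar w * w ∈ Esub G := by
  induction w using Con.induction_on with
  | H x =>
      have := star_sandwich x 1 (one_mem _)
      simpa using this

lemma of_inv_mul_e (h : G) :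
    ExelMonoid.of h⁻¹ * ExelMonoid.e h = ExelMonoid.of h⁻¹ := by
  show ExelMonoid.of h⁻¹ * (ExelMonoid.of h * ExelMonoid.of h⁻¹) = _
  rw [← mul_assoc, exel_left h h⁻¹, mul_inv_cancel, exel_of_one, mul_one]

lemma key_monoid (w : ExelMonoid G) (h : G) :
    ExelMonoid.of h⁻¹ * (exelStar w * w)
      = exelStar (w * ExelMonoid.of h) * (w * ExelMonoid.of h) * ExelMonoid.of h⁻¹ := by
  rw [exelStar_mul, exelStar_of]
  calc ExelMonoid.of h⁻¹ * (exelStar w * w)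
      = (ExelMonoid.of h⁻¹ * ExelMonoid.e h) * (exelStar w * w) := by rw [of_inv_mul_e]
    _ = ExelMonoid.of h⁻¹ * (ExelMonoid.e h * (exelStar w * w)) := by rw [mul_assoc]
    _ = ExelMonoid.of h⁻¹ * ((exelStar w * w) * ExelMonoid.e h) := by
        rw [e_commutes_E (star_self_mem w) h]
    _ = exelStar (ExelMonoid.of h) * exelStar w * (w * ExelMonoid.of h) * ExelMonoid.of h⁻¹ := by
        rw [exelStar_of]
        show ExelMonoid.of h⁻¹ * ((exelStar w * w) * (ExelMonoid.of h * ExelMonoid.of h⁻¹)) = _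
        simp only [mul_assoc]

end AuxLemmas

section AlgLemmas

variable (K G : Type*) [CommRing K] [Group G]

lemma of_mem_B {m : ExelMonoid G} (hm : m ∈ Esub G) :
    MonoidAlgebra.of K (ExelMonoid G) m ∈ Bsub K G := by
  induction hm using Submonoid.closure_induction with
  | mem x hx =>
      obtain ⟨g, rfl⟩ := hx
      have : MonoidAlgebra.of K (ExelMonoid G) (ExelMonoid.e g) = eK K g := by
        show MonoidAlgebra.of K (ExelMonoid G) (ExelMonoid.of g * ExelMonoid.of g⁻¹) = _
        rw [map_mul]; rfl
      rw [this]
      exact Algebra.subset_adjoin ⟨g, rfl⟩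
  | one => rw [map_one]; exact one_mem _
  | mul x y _ _ ihx ihy => rw [map_mul]; exact mul_mem ihx ihy

lemma single_star_mem (w : ExelMonoid G) (a : K) :
    (MonoidAlgebra.single (exelStar w * w) a : KparG K G) ∈ Bsub K G := by
  have h1 : (MonoidAlgebra.single (exelStar w * w) a : KparG K G)
      = a • MonoidAlgebra.of K (ExelMonoid G) (exelStar w * w) := by
    rw [MonoidAlgebra.of_apply, MonoidAlgebra.smul_single', mul_one]
  rw [h1]
  exact Subalgebra.smul_mem _ (of_mem_B K G (star_self_mem w)) a

end AlgLemmas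

/-- `ε` takes values in `B`, and for all `h ∈ G` and `z ∈ K_par G` one has
`[h⁻¹] ε(z) = ε(z[h]) [h⁻¹]`. -/
theorem eps_commutation (K G : Type*) [CommRing K] [Group G] :
    (∀ z : KparG K G, epsKpar K G z ∈ Bsub K G) ∧
      ∀ (h : G) (z : KparG K G),
        pr K h⁻¹ * epsKpar K G z = epsKpar K G (z * pr K h) * pr K h⁻¹ := by
  constructor
  · intro z
    induction z using MonoidAlgebra.induction with
    | zero => rw [map_zero]; exact zero_mem _
    | single_add w a f hwf ha ih =>
        rw [map_add]
        refine add_mem ?_ ih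
        have : epsKpar K G (MonoidAlgebra.single w a)
            = MonoidAlgebra.single (exelStar w * w) a := by
          show MonoidAlgebra.mapDomainLinearMap K K _ _ = _
          rw [MonoidAlgebra.mapDomainLinearMap_single]
        rw [this]
        exact single_star_mem K G w a
  · intro h z
    induction z using MonoidAlgebra.induction with
    | zero => simp
    | single_add w a f hwf ha ih =>
        rw [map_add, mul_add, add_mul, map_add, add_mul, ih]
        congr 1
        have e1 : epsKpar K G (MonoidAlgebra.single w a)
            = MonoidAlgebra.single (exelStar w * w) a := by
          show MonoidAlgebra.mapDomainLinearMap K K _ _ = _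
          rw [MonoidAlgebra.mapDomainLinearMap_single]
        have e2 : MonoidAlgebra.single w a * pr K h
            = MonoidAlgebra.single (w * ExelMonoid.of h) a := by
          show MonoidAlgebra.single w a * MonoidAlgebra.single (ExelMonoid.of h) 1 = _
          rw [MonoidAlgebra.single_mul_single, mul_one]
        have e3 : epsKpar K G (MonoidAlgebra.single (w * ExelMonoid.of h) a)
            = MonoidAlgebra.single
                (exelStar (w * ExelMonoid.of h) * (w * ExelMonoid.of h)) a := by
          show MonoidAlgebra.mapDomainLinearMap K K _ _ = _
          rw [MonoidAlgebra.mapDomainLinearMap_single]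
        rw [e1, e2, e3]
        show MonoidAlgebra.single (ExelMonoid.of h⁻¹) 1 * MonoidAlgebra.single _ a
          = MonoidAlgebra.single _ a * MonoidAlgebra.single (ExelMonoid.of h⁻¹) 1
        rw [MonoidAlgebra.single_mul_single, MonoidAlgebra.single_mul_single,
          one_mul, mul_one, key_monoid]
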